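/- Suppose ‖A‖ > 0. Let C_der := ‖A‖ + ‖B‖R + ‖B‖‖f‖/‖A‖ and C_J := 2·C_der. For each integer i ≥ 0, the map v ↦ D^i v is differentiable, and its Fréchet derivative J_v(D^i v) at any v ∈ B_R satisfies ‖J_v(D^i v)‖ ≤ C_J^i · i! in operator norm. -/

import Mathlib

noncomputable section
set_option maxHeartbeats 1000000

/-- The formal time derivatives `D^i v` of a solution of
`dv/dt = -A v - B(v,v) + f` at time `0`, defined recursively by
`D⁰v = v`, `D¹v = F(v) = f - A v - B(v,v)` and, for `i ≥ 2`,
`D^i v = -A (D^{i-1} v) - ∑_{j=0}^{i-1} C(i-1,j) B(D^j v, D^{i-1-j} v)`. -/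
def formalDeriv {E : Type*} [AddCommGroup E] [Module ℝ E]
    (A : E → E) (B : E → E → E) (f : E) : ℕ → E → E
  | 0, v => v
  | 1, v => f - A v - B v v
  | (i + 2), v =>
      -(A (formalDeriv A B f (i + 1) v)) -
        ∑ j ∈ (Finset.range (i + 2)).attach,
          ((i + 1).choose j.1 : ℝ) •
            B (formalDeriv A B f j.1 v) (formalDeriv A B f (i + 1 - j.1) v)
  termination_by i _ => i
  decreasing_by
  · omega
  · have := Finset.mem_range.mp j.2; omega
  · have := Finset.mem_range.mp j.2; omega

lemma formalDeriv_aux {E : Type*} [NormedAddCommGroup E] [NormedSpace ℝ E]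
    (A : E →L[ℝ] E) (B : E →L[ℝ] E →L[ℝ] E) (f : E) (R a : ℝ)
    (hR : 0 < R) (hA : 0 < ‖A‖) (ha : a = R + ‖f‖ / ‖A‖) :
    ∀ i : ℕ,
      Differentiable ℝ (formalDeriv (fun x => A x) (fun x y => B x y) f i) ∧
      (∀ v : E, ‖v‖ ≤ R →
        ‖formalDeriv (fun x => A x) (fun x y => B x y) f i v‖ ≤
          a * (‖A‖ + ‖B‖ * a) ^ i * (Nat.factorial i)) ∧
      (∀ v : E, ‖v‖ ≤ R →
        ‖fderiv ℝ (formalDeriv (fun x => A x) (fun x y => B x y) f i) v‖ ≤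
          (2 * (‖A‖ + ‖B‖ * a)) ^ i * (Nat.factorial i)) := by
  set g : ℕ → E → E := formalDeriv (fun x => A x) (fun x y => B x y) f with hg
  have hB0 : (0:ℝ) ≤ ‖B‖ := B.opNorm_nonneg
  have haR : R ≤ a := by
    rw [ha]; nlinarith [norm_nonneg f, div_nonneg (norm_nonneg f) hA.le]
  have ha0 : 0 < a := lt_of_lt_of_le hR haR
  intro i
  induction i using Nat.strong_induction_on with
  | _ i ih =>
  match i with
  | 0 =>
    have h0 : g 0 = (id : E → E) := by funext v; rw [hg, formalDeriv]; rfl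
    refine ⟨h0 ▸ differentiable_id, ?_, ?_⟩
    · intro v hv
      rw [h0]
      simpa using hv.trans haR
    · intro v hv
      rw [h0, fderiv_id]
      simpa using ContinuousLinearMap.norm_id_le
  | 1 =>
    have h1e : g 1 = fun v => f - A v - B v v := by
      funext v; rw [hg, formalDeriv]
    have key : ∀ v : E, HasFDerivAt (g 1)
        ((0 - A) - ((B v).comp (ContinuousLinearMap.id ℝ E) + B.flip v)) v := by
      intro v
      have hBvv : HasFDerivAt (fun v : E => B v v)
          ((B v).comp (ContinuousLinearMap.id ℝ E) + B.flip v) v := by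
        have := (B.hasFDerivAt (x := v)).clm_apply (hasFDerivAt_id v)
        simpa using this
      have h := ((hasFDerivAt_const f v).sub A.hasFDerivAt).sub hBvv
      rw [h1e]
      exact h
    refine ⟨fun v => (key v).differentiableAt, ?_, ?_⟩
    · intro v hv
      rw [h1e]
      have h2 : ‖f - A v - B v v‖ ≤ ‖f‖ + ‖A‖ * ‖v‖ + ‖B‖ * ‖v‖ * ‖v‖ := by
        refine (norm_sub_le _ _).trans ?_
        have := (norm_sub_le f (A v))
        have hAv := A.le_opNorm v
        have hBvv := (B.le_opNorm₂ v v)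
        nlinarith [norm_nonneg (B v v)]
      have hfa : ‖f‖ = (a - R) * ‖A‖ := by
        rw [ha]; field_simp; ring
      simp only [pow_one, Nat.factorial_one, Nat.cast_one, mul_one]
      have hv0 : (0:ℝ) ≤ ‖v‖ := norm_nonneg v
      nlinarith [mul_le_mul_of_nonneg_left (mul_le_mul hv hv hv0 hR.le) hB0,
        mul_le_mul_of_nonneg_left (mul_le_mul haR haR hR.le ha0.le) hB0,
        mul_le_mul_of_nonneg_left hv hA.le]
    · intro v hv
      rw [(key v).fderiv]
      have h2 : ‖(0 - A) - ((B v).comp (ContinuousLinearMap.id ℝ E) + B.flip v)‖ ≤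
          ‖A‖ + (‖B‖ * ‖v‖ + ‖B‖ * ‖v‖) := by
        refine (norm_sub_le _ _).trans ?_
        have e1 : ‖(0:E →L[ℝ] E) - A‖ = ‖A‖ := by rw [zero_sub, norm_neg]
        have e2 : ‖(B v).comp (ContinuousLinearMap.id ℝ E)‖ ≤ ‖B‖ * ‖v‖ := by
          rw [ContinuousLinearMap.comp_id]; exact B.le_opNorm v
        have e3 : ‖B.flip v‖ ≤ ‖B‖ * ‖v‖ := by
          have := B.flip.le_opNorm v
          rwa [ContinuousLinearMap.opNorm_flip] at this
        have := norm_add_le ((B v).comp (ContinuousLinearMap.id ℝ E)) (B.flip v)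
        rw [e1]; nlinarith
      simp only [pow_one, Nat.factorial_one, Nat.cast_one, mul_one]
      refine h2.trans ?_
      nlinarith [hv, hB0, hA.le, haR]
  | (i + 2) =>
    have hd : ∀ j, j < i + 2 → Differentiable ℝ (g j) := fun j hj => (ih j hj).1
    have hvb : ∀ j, j < i + 2 → ∀ v : E, ‖v‖ ≤ R →
        ‖g j v‖ ≤ a * (‖A‖ + ‖B‖ * a) ^ j * (Nat.factorial j) :=
      fun j hj => (ih j hj).2.1
    have hJb : ∀ j, j < i + 2 → ∀ v : E, ‖v‖ ≤ R →
        ‖fderiv ℝ (g j) v‖ ≤ (2 * (‖A‖ + ‖B‖ * a)) ^ j * (Nat.factorial j) :=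
      fun j hj => (ih j hj).2.2
    set Cd : ℝ := ‖A‖ + ‖B‖ * a with hCd
    set Cj : ℝ := 2 * Cd with hCj
    have hCd0 : 0 < Cd := by positivity
    have hCj0 : 0 < Cj := by positivity
    have heq : g (i + 2) = fun v =>
        -(A (g (i + 1) v)) - ∑ j ∈ (Finset.range (i + 2)).attach,
          ((i + 1).choose j.1 : ℝ) • B (g j.1 v) (g (i + 1 - j.1) v) := by
      funext v; rw [hg]; rw [formalDeriv]
    have key : ∀ v : E, HasFDerivAt (g (i + 2))
        (-(A.comp (fderiv ℝ (g (i + 1)) v)) - ∑ j ∈ (Finset.range (i + 2)).attach,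
          ((i + 1).choose j.1 : ℝ) •
            ((B (g j.1 v)).comp (fderiv ℝ (g (i + 1 - j.1)) v) +
              (B.comp (fderiv ℝ (g j.1) v)).flip (g (i + 1 - j.1) v))) v := by
      intro v
      rw [heq]
      have h1 : HasFDerivAt (fun v => A (g (i + 1) v))
          (A.comp (fderiv ℝ (g (i + 1)) v)) v :=
        A.hasFDerivAt.comp v ((hd (i + 1) (by omega)) v).hasFDerivAt
      have h2 : ∀ j ∈ (Finset.range (i + 2)).attach,
          HasFDerivAt (fun v => ((i + 1).choose j.1 : ℝ) • B (g j.1 v) (g (i + 1 - j.1) v))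
            (((i + 1).choose j.1 : ℝ) •
              ((B (g j.1 v)).comp (fderiv ℝ (g (i + 1 - j.1)) v) +
                (B.comp (fderiv ℝ (g j.1) v)).flip (g (i + 1 - j.1) v))) v := by
        intro j _
        have hj1 : j.1 < i + 2 := Finset.mem_range.mp j.2
        have hj2 : i + 1 - j.1 < i + 2 := by omega
        have hc : HasFDerivAt (fun v => B (g j.1 v))
            (B.comp (fderiv ℝ (g j.1) v)) v :=
          B.hasFDerivAt.comp v ((hd j.1 hj1) v).hasFDerivAt
        exact (hc.clm_apply ((hd _ hj2) v).hasFDerivAt).const_smul _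
      exact h1.neg.sub (HasFDerivAt.fun_sum h2)
    refine ⟨fun v => (key v).differentiableAt, ?_, ?_⟩
    · -- value bound
      intro v hv
      rw [heq]
      have hterm : ∀ j ∈ (Finset.range (i + 2)).attach,
          ‖((i + 1).choose j.1 : ℝ) • B (g j.1 v) (g (i + 1 - j.1) v)‖ ≤
            ‖B‖ * a * a * Cd ^ (i + 1) * (Nat.factorial (i + 1)) := by
        intro j _
        have hj1 : j.1 < i + 2 := Finset.mem_range.mp j.2
        have hjle : j.1 ≤ i + 1 := by omega
        have hj2 : i + 1 - j.1 < i + 2 := by omega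
        have e1 := hvb j.1 hj1 v hv
        have e2 := hvb (i + 1 - j.1) hj2 v hv
        have e3 : ‖B (g j.1 v) (g (i + 1 - j.1) v)‖ ≤ ‖B‖ * ‖g j.1 v‖ * ‖g (i + 1 - j.1) v‖ :=
          B.le_opNorm₂ _ _
        rw [norm_smul, Real.norm_eq_abs, abs_of_nonneg (by positivity)]
        have hfac : ((i + 1).choose j.1 : ℝ) * (Nat.factorial j.1) *
            (Nat.factorial (i + 1 - j.1)) = (Nat.factorial (i + 1)) := by
          rw [← Nat.cast_mul, ← Nat.cast_mul, Nat.choose_mul_factorial_mul_factorial hjle]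
        have hpow : Cd ^ j.1 * Cd ^ (i + 1 - j.1) = Cd ^ (i + 1) := by
          rw [← pow_add]; congr 1; omega
        calc ((i + 1).choose j.1 : ℝ) * ‖B (g j.1 v) (g (i + 1 - j.1) v)‖
            ≤ ((i + 1).choose j.1 : ℝ) * (‖B‖ * (a * Cd ^ j.1 * (Nat.factorial j.1)) *
              (a * Cd ^ (i + 1 - j.1) * (Nat.factorial (i + 1 - j.1)))) := by
              refine mul_le_mul_of_nonneg_left ?_ (by positivity)
              calc ‖B (g j.1 v) (g (i + 1 - j.1) v)‖
                  ≤ ‖B‖ * ‖g j.1 v‖ * ‖g (i + 1 - j.1) v‖ := e3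
                _ ≤ ‖B‖ * (a * Cd ^ j.1 * (Nat.factorial j.1)) *
                    (a * Cd ^ (i + 1 - j.1) * (Nat.factorial (i + 1 - j.1))) := by
                    have := norm_nonneg (g j.1 v)
                    have := norm_nonneg (g (i + 1 - j.1) v)
                    have h1 : (0:ℝ) ≤ a * Cd ^ j.1 * (Nat.factorial j.1) := by positivity
                    exact mul_le_mul (mul_le_mul le_rfl e1 (norm_nonneg _) hB0) e2
                      (norm_nonneg _) (by positivity)
          _ = ‖B‖ * a * a * (Cd ^ j.1 * Cd ^ (i + 1 - j.1)) *
              (((i + 1).choose j.1 : ℝ) * (Nat.factorial j.1) * (Nat.factorial (i + 1 - j.1))) := by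
              ring
          _ = ‖B‖ * a * a * Cd ^ (i + 1) * (Nat.factorial (i + 1)) := by
              rw [hpow, hfac]
      calc ‖-(A (g (i + 1) v)) - ∑ j ∈ (Finset.range (i + 2)).attach,
              ((i + 1).choose j.1 : ℝ) • B (g j.1 v) (g (i + 1 - j.1) v)‖
          ≤ ‖A (g (i + 1) v)‖ + ∑ j ∈ (Finset.range (i + 2)).attach,
              ‖((i + 1).choose j.1 : ℝ) • B (g j.1 v) (g (i + 1 - j.1) v)‖ := by
            refine (norm_sub_le _ _).trans ?_
            rw [norm_neg]
            exact add_le_add le_rfl (norm_sum_le _ _)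
        _ ≤ ‖A‖ * (a * Cd ^ (i + 1) * (Nat.factorial (i + 1))) +
            ∑ j ∈ (Finset.range (i + 2)).attach,
              (‖B‖ * a * a * Cd ^ (i + 1) * (Nat.factorial (i + 1))) := by
            refine add_le_add ?_ (Finset.sum_le_sum hterm)
            exact (A.le_opNorm _).trans
              (mul_le_mul_of_nonneg_left (hvb (i + 1) (by omega) v hv) (norm_nonneg _))
        _ = ‖A‖ * (a * Cd ^ (i + 1) * (Nat.factorial (i + 1))) +
            (i + 2) * (‖B‖ * a * a * Cd ^ (i + 1) * (Nat.factorial (i + 1))) := by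
            rw [Finset.sum_const, Finset.card_attach, Finset.card_range]
            push_cast; ring
        _ = (‖A‖ + ((i:ℝ) + 2) * (‖B‖ * a)) *
              (a * Cd ^ (i + 1) * (Nat.factorial (i + 1))) := by ring
        _ ≤ (Cd * ((i:ℝ) + 2)) * (a * Cd ^ (i + 1) * (Nat.factorial (i + 1))) := by
            refine mul_le_mul_of_nonneg_right ?_
              (mul_nonneg (mul_nonneg ha0.le (pow_nonneg hCd0.le _)) (Nat.cast_nonneg _))
            rw [hCd]
            nlinarith [mul_nonneg (Nat.cast_nonneg (α := ℝ) i) hA.le,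
              mul_nonneg (Nat.cast_nonneg (α := ℝ) i) (mul_nonneg hB0 ha0.le)]
        _ = a * Cd ^ (i + 2) * (Nat.factorial (i + 2)) := by
            rw [Nat.factorial_succ (i + 1), pow_succ]; push_cast; ring
    · -- Jacobian bound
      intro v hv
      rw [(key v).fderiv]
      have hterm : ∀ j ∈ (Finset.range (i + 2)).attach,
          ‖((i + 1).choose j.1 : ℝ) •
            ((B (g j.1 v)).comp (fderiv ℝ (g (i + 1 - j.1)) v) +
              (B.comp (fderiv ℝ (g j.1) v)).flip (g (i + 1 - j.1) v))‖ ≤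
            ‖B‖ * a * (Nat.factorial (i + 1)) * Cj ^ (i + 1) *
              ((1/2:ℝ) ^ j.1 + (1/2:ℝ) ^ (i + 1 - j.1)) := by
        intro j _
        have hj1 : j.1 < i + 2 := Finset.mem_range.mp j.2
        have hjle : j.1 ≤ i + 1 := by omega
        have hj2 : i + 1 - j.1 < i + 2 := by omega
        have eV1 := hvb j.1 hj1 v hv
        have eV2 := hvb (i + 1 - j.1) hj2 v hv
        have eJ1 := hJb j.1 hj1 v hv
        have eJ2 := hJb (i + 1 - j.1) hj2 v hv
        have hfac : ((i + 1).choose j.1 : ℝ) * (Nat.factorial j.1) *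
            (Nat.factorial (i + 1 - j.1)) = (Nat.factorial (i + 1)) := by
          rw [← Nat.cast_mul, ← Nat.cast_mul, Nat.choose_mul_factorial_mul_factorial hjle]
        have hCdCj : Cd = Cj * (1/2) := by rw [hCj]; ring
        have hsplit : Cj ^ (i + 1) = Cj ^ j.1 * Cj ^ (i + 1 - j.1) := by
          rw [← pow_add]; congr 1; omega
        have hpow1 : Cd ^ j.1 * Cj ^ (i + 1 - j.1) = Cj ^ (i + 1) * (1/2:ℝ) ^ j.1 := by
          rw [hsplit, hCdCj, mul_pow Cj ((1:ℝ)/2) j.1]; ring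
        have hpow2 : Cj ^ j.1 * Cd ^ (i + 1 - j.1) = Cj ^ (i + 1) * (1/2:ℝ) ^ (i + 1 - j.1) := by
          rw [hsplit, hCdCj, mul_pow Cj ((1:ℝ)/2) (i + 1 - j.1)]; ring
        have hT1 : ‖(B (g j.1 v)).comp (fderiv ℝ (g (i + 1 - j.1)) v)‖ ≤
            ‖B‖ * ‖g j.1 v‖ * ‖fderiv ℝ (g (i + 1 - j.1)) v‖ := by
          refine (ContinuousLinearMap.opNorm_comp_le _ _).trans ?_
          exact mul_le_mul_of_nonneg_right (B.le_opNorm _) (norm_nonneg _)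
        have hT2 : ‖(B.comp (fderiv ℝ (g j.1) v)).flip (g (i + 1 - j.1) v)‖ ≤
            ‖B‖ * ‖fderiv ℝ (g j.1) v‖ * ‖g (i + 1 - j.1) v‖ := by
          refine ((B.comp (fderiv ℝ (g j.1) v)).flip.le_opNorm _).trans ?_
          rw [ContinuousLinearMap.opNorm_flip]
          exact mul_le_mul_of_nonneg_right (ContinuousLinearMap.opNorm_comp_le _ _)
            (norm_nonneg _)
        have hV1n : (0:ℝ) ≤ a * Cd ^ j.1 * (Nat.factorial j.1) :=
          mul_nonneg (mul_nonneg ha0.le (pow_nonneg hCd0.le _)) (Nat.cast_nonneg _)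
        have hV2n : (0:ℝ) ≤ a * Cd ^ (i + 1 - j.1) * (Nat.factorial (i + 1 - j.1)) :=
          mul_nonneg (mul_nonneg ha0.le (pow_nonneg hCd0.le _)) (Nat.cast_nonneg _)
        have hJ1n : (0:ℝ) ≤ Cj ^ j.1 * (Nat.factorial j.1) :=
          mul_nonneg (pow_nonneg hCj0.le _) (Nat.cast_nonneg _)
        refine le_trans (ContinuousLinearMap.opNorm_smul_le _ _) ?_
        rw [Real.norm_eq_abs, abs_of_nonneg (Nat.cast_nonneg _)]
        calc ((i + 1).choose j.1 : ℝ) *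
              ‖(B (g j.1 v)).comp (fderiv ℝ (g (i + 1 - j.1)) v) +
                (B.comp (fderiv ℝ (g j.1) v)).flip (g (i + 1 - j.1) v)‖
            ≤ ((i + 1).choose j.1 : ℝ) *
              (‖B‖ * (a * Cd ^ j.1 * (Nat.factorial j.1)) *
                (Cj ^ (i + 1 - j.1) * (Nat.factorial (i + 1 - j.1))) +
               ‖B‖ * (Cj ^ j.1 * (Nat.factorial j.1)) *
                (a * Cd ^ (i + 1 - j.1) * (Nat.factorial (i + 1 - j.1)))) := by
              refine mul_le_mul_of_nonneg_left ?_ (Nat.cast_nonneg _)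
              refine (norm_add_le _ _).trans (add_le_add (hT1.trans ?_) (hT2.trans ?_))
              · exact mul_le_mul (mul_le_mul_of_nonneg_left eV1 hB0) eJ2 (norm_nonneg _)
                  (mul_nonneg hB0 hV1n)
              · exact mul_le_mul (mul_le_mul_of_nonneg_left eJ1 hB0) eV2 (norm_nonneg _)
                  (mul_nonneg hB0 hJ1n)
          _ = ‖B‖ * a * (((i + 1).choose j.1 : ℝ) * (Nat.factorial j.1) *
                (Nat.factorial (i + 1 - j.1))) * (Cd ^ j.1 * Cj ^ (i + 1 - j.1)) +
              ‖B‖ * a * (((i + 1).choose j.1 : ℝ) * (Nat.factorial j.1) *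
                (Nat.factorial (i + 1 - j.1))) * (Cj ^ j.1 * Cd ^ (i + 1 - j.1)) := by
              ring
          _ = ‖B‖ * a * (Nat.factorial (i + 1)) * Cj ^ (i + 1) *
              ((1/2:ℝ) ^ j.1 + (1/2:ℝ) ^ (i + 1 - j.1)) := by
              rw [hfac, hpow1, hpow2]; ring
      have hBan : (0:ℝ) ≤ ‖B‖ * a * (Nat.factorial (i + 1)) * Cj ^ (i + 1) :=
        mul_nonneg (mul_nonneg (mul_nonneg hB0 ha0.le) (Nat.cast_nonneg _))
          (pow_nonneg hCj0.le _)
      calc ‖-(A.comp (fderiv ℝ (g (i + 1)) v)) - ∑ j ∈ (Finset.range (i + 2)).attach,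
              ((i + 1).choose j.1 : ℝ) •
                ((B (g j.1 v)).comp (fderiv ℝ (g (i + 1 - j.1)) v) +
                  (B.comp (fderiv ℝ (g j.1) v)).flip (g (i + 1 - j.1) v))‖
          ≤ ‖A.comp (fderiv ℝ (g (i + 1)) v)‖ + ∑ j ∈ (Finset.range (i + 2)).attach,
              ‖((i + 1).choose j.1 : ℝ) •
                ((B (g j.1 v)).comp (fderiv ℝ (g (i + 1 - j.1)) v) +
                  (B.comp (fderiv ℝ (g j.1) v)).flip (g (i + 1 - j.1) v))‖ := by
            refine (norm_sub_le _ _).trans ?_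
            rw [norm_neg]
            exact add_le_add le_rfl (norm_sum_le _ _)
        _ ≤ ‖A‖ * (Cj ^ (i + 1) * (Nat.factorial (i + 1))) +
            ∑ j ∈ (Finset.range (i + 2)).attach,
              (‖B‖ * a * (Nat.factorial (i + 1)) * Cj ^ (i + 1) *
                ((1/2:ℝ) ^ j.1 + (1/2:ℝ) ^ (i + 1 - j.1))) := by
            refine add_le_add ?_ (Finset.sum_le_sum hterm)
            refine (ContinuousLinearMap.opNorm_comp_le _ _).trans ?_
            exact mul_le_mul_of_nonneg_left (hJb (i + 1) (by omega) v hv) A.opNorm_nonneg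
        _ = ‖A‖ * (Cj ^ (i + 1) * (Nat.factorial (i + 1))) +
            ‖B‖ * a * (Nat.factorial (i + 1)) * Cj ^ (i + 1) *
              (∑ k ∈ Finset.range (i + 2), ((1/2:ℝ) ^ k + (1/2:ℝ) ^ (i + 1 - k))) := by
            rw [Finset.sum_attach (Finset.range (i + 2))
              (fun k => ‖B‖ * a * ((Nat.factorial (i + 1)) : ℝ) * Cj ^ (i + 1) *
                ((1/2:ℝ) ^ k + (1/2:ℝ) ^ (i + 1 - k))), ← Finset.mul_sum]
        _ ≤ ‖A‖ * (Cj ^ (i + 1) * (Nat.factorial (i + 1))) +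
            ‖B‖ * a * (Nat.factorial (i + 1)) * Cj ^ (i + 1) * 4 := by
            refine add_le_add le_rfl (mul_le_mul_of_nonneg_left ?_ hBan)
            have h1 : ∑ k ∈ Finset.range (i + 2), ((1/2:ℝ) ^ (i + 1 - k)) =
                ∑ k ∈ Finset.range (i + 2), ((1/2:ℝ) ^ k) := by
              rw [← Finset.sum_range_reflect (fun k => (1/2:ℝ) ^ k) (i + 2)]
              exact Finset.sum_congr rfl (fun k hk => by norm_num)
            rw [Finset.sum_add_distrib, h1]
            have h2 := sum_geometric_two_le (i + 2)
            linarith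
        _ = (‖A‖ + 4 * (‖B‖ * a)) * (Cj ^ (i + 1) * (Nat.factorial (i + 1))) := by ring
        _ ≤ (Cj * ((i:ℝ) + 2)) * (Cj ^ (i + 1) * (Nat.factorial (i + 1))) := by
            refine mul_le_mul_of_nonneg_right ?_
              (mul_nonneg (pow_nonneg hCj0.le _) (Nat.cast_nonneg _))
            rw [hCj, hCd]
            nlinarith [mul_nonneg (Nat.cast_nonneg (α := ℝ) i) hA.le,
              mul_nonneg (Nat.cast_nonneg (α := ℝ) i) (mul_nonneg hB0 ha0.le)]
        _ = Cj ^ (i + 2) * (Nat.factorial (i + 2)) := by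
            rw [Nat.factorial_succ (i + 1), pow_succ]; push_cast; ring

/-- with `C_der = ‖A‖ + ‖B‖R + ‖B‖‖f‖/‖A‖` and `C_J = 2 C_der`,
each map `v ↦ D^i v` is differentiable and its Fréchet derivative at any
`v ∈ B_R` has operator norm at most `C_J^i · i!`. -/
theorem formalDeriv_jacobian_bound {d : ℕ}
    (A : EuclideanSpace ℝ (Fin d) →L[ℝ] EuclideanSpace ℝ (Fin d))
    (B : EuclideanSpace ℝ (Fin d) →L[ℝ] EuclideanSpace ℝ (Fin d) →L[ℝ] EuclideanSpace ℝ (Fin d))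
    (f : EuclideanSpace ℝ (Fin d))
    (R : ℝ) (hR : 0 < R) (hA : 0 < ‖A‖) :
    ∀ i : ℕ,
      Differentiable ℝ (formalDeriv (fun x => A x) (fun x y => B x y) f i) ∧
      ∀ v : EuclideanSpace ℝ (Fin d), ‖v‖ ≤ R →
        ‖fderiv ℝ (formalDeriv (fun x => A x) (fun x y => B x y) f i) v‖ ≤
          (2 * (‖A‖ + ‖B‖ * R + ‖B‖ * ‖f‖ / ‖A‖)) ^ i * (Nat.factorial i) := by
  intro i
  have h := formalDeriv_aux A B f R (R + ‖f‖ / ‖A‖) hR hA rfl i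
  refine ⟨h.1, fun v hv => ?_⟩
  have hb := h.2.2 v hv
  have e : 2 * (‖A‖ + ‖B‖ * (R + ‖f‖ / ‖A‖)) = 2 * (‖A‖ + ‖B‖ * R + ‖B‖ * ‖f‖ / ‖A‖) := by
    ring
  rwa [e] at hb
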